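/- arXiv:1408.3092 — 3 statements merged into one kernel-verified Lean document; each statement's English description precedes it below -/
import Mathlib

section
/- Let g be a d-dimensional Gaussian random vector with mean zero and covariance σ²I_d (σ > 0). Then for every ε with 0 < ε ≤ σ√d, P(‖g‖₂ ≤ ε) ≥ (ε/(3σ√d))^d. -/
open MeasureTheory ProbabilityTheory

lemma exp_half_lt : Real.exp (1/2) < 1.7 := by
  nlinarith [Real.exp_one_lt_d9, Real.exp_pos (1/2), Real.exp_add (1/2) (1/2),
    Real.exp_pos 1]

lemma sqrt_two_pi_lt : Real.sqrt (2 * Real.pi) < 2.6 := by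
  have h : (2 : ℝ) * Real.pi < 2.6 ^ 2 := by nlinarith [Real.pi_lt_d2]
  calc Real.sqrt (2 * Real.pi) < Real.sqrt (2.6 ^ 2) := by
        apply Real.sqrt_lt_sqrt (by positivity) h
    _ = 2.6 := by rw [Real.sqrt_sq (by norm_num)]

/-- One-dimensional small ball lower bound. -/
lemma gaussian_interval_lb (σ : NNReal) (hσ : 0 < σ) (t : ℝ) (ht : 0 < t)
    (htσ : t ≤ (σ : ℝ)) :
    ENNReal.ofReal (t / (3 * (σ : ℝ))) ≤
      gaussianReal 0 (σ ^ 2) (Set.Icc (-t) t) := by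
  have hσR : (0:ℝ) < (σ:ℝ) := hσ
  have hv : (σ ^ 2 : NNReal) ≠ 0 := by positivity
  rw [gaussianReal_apply 0 hv]
  set c : ℝ := (Real.sqrt (2 * Real.pi * ((σ:ℝ)^2)))⁻¹ * Real.exp (-(1/2)) with hc
  have hcpos : 0 < c := by positivity
  have hlb : ∀ x ∈ Set.Icc (-t) t, ENNReal.ofReal c ≤ gaussianPDF 0 (σ^2) x := by
    intro x hx
    rw [gaussianPDF]
    apply ENNReal.ofReal_le_ofReal
    rw [gaussianPDFReal]
    simp only [sub_zero, NNReal.coe_pow]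
    apply mul_le_mul_of_nonneg_left _ (by positivity)
    apply Real.exp_le_exp.mpr
    rw [neg_div, neg_le_neg_iff]
    have hx2 : x ^ 2 ≤ (σ:ℝ)^2 := by
      have : |x| ≤ (σ:ℝ) := by
        rw [abs_le]; constructor <;> [linarith [hx.1]; linarith [hx.2]]
      calc x ^ 2 = |x| ^ 2 := (sq_abs x).symm
        _ ≤ (σ:ℝ)^2 := by gcongr
    rw [div_le_div_iff₀ (by positivity) (by norm_num)]
    nlinarith
  calc ENNReal.ofReal (t / (3 * (σ : ℝ)))
      ≤ ENNReal.ofReal c * volume (Set.Icc (-t) t) := by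
        rw [Real.volume_Icc]
        have h2t : t - (-t) = 2 * t := by ring
        rw [h2t, ← ENNReal.ofReal_mul hcpos.le]
        apply ENNReal.ofReal_le_ofReal
        -- need t / (3σ) ≤ c * (2t)
        rw [div_le_iff₀ (by positivity)]
        have hsq : Real.sqrt (2 * Real.pi * ((σ:ℝ)^2)) =
            Real.sqrt (2 * Real.pi) * (σ:ℝ) := by
          rw [Real.sqrt_mul (by positivity), Real.sqrt_sq hσR.le]
        have hexp : Real.exp (-(1/2)) = (Real.exp (1/2))⁻¹ := by
          rw [← Real.exp_neg]
        have h1 : Real.sqrt (2*Real.pi) < 2.6 := sqrt_two_pi_lt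
        have h2 : Real.exp (1/2) < 1.7 := exp_half_lt
        have h3 : (0:ℝ) < Real.sqrt (2*Real.pi) := by positivity
        have h4 : (0:ℝ) < Real.exp (1/2) := Real.exp_pos _
        rw [hc, hsq, hexp]
        rw [mul_inv, show (Real.sqrt (2*Real.pi))⁻¹ * (σ:ℝ)⁻¹ *
          (Real.exp (1/2))⁻¹ * (2*t) * (3 * (σ:ℝ)) =
          (6 * t * (σ:ℝ) * (σ:ℝ)⁻¹) / (Real.sqrt (2*Real.pi) * Real.exp (1/2)) by
            field_simp; ring]
        rw [mul_inv_cancel_right₀ hσR.ne']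
        rw [le_div_iff₀ (by positivity)]
        nlinarith [mul_lt_mul'' h1 h2 h3.le h4.le, mul_pos h3 h4, ht]
    _ ≤ ∫⁻ x in Set.Icc (-t) t, gaussianPDF 0 (σ^2) x := by
        rw [← setLIntegral_const]
        exact setLIntegral_mono (measurable_gaussianPDF 0 (σ^2)) hlb

/-- small ball probability of a `d`-dimensional Gaussian vector with
independent `N(0,σ²)` coordinates. -/
theorem gaussian_small_ball (d : ℕ) (σ : NNReal) (hσ : 0 < σ)
    (ε : ℝ) (hε : 0 < ε) (hεd : ε ≤ (σ : ℝ) * Real.sqrt d) :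
    ENNReal.ofReal ((ε / (3 * (σ : ℝ) * Real.sqrt d)) ^ d) ≤
      (Measure.pi fun _ : Fin d => gaussianReal 0 (σ ^ 2))
        {x | Real.sqrt (∑ i, (x i) ^ 2) ≤ ε} := by
  have hσR : (0:ℝ) < (σ:ℝ) := hσ
  rcases Nat.eq_zero_or_pos d with hd | hd
  · subst hd; simp at hεd; linarith
  have hdR : (0:ℝ) < Real.sqrt d := Real.sqrt_pos.mpr (by exact_mod_cast hd)
  set t : ℝ := ε / Real.sqrt d with htdef
  have ht : 0 < t := by positivity
  have htσ : t ≤ (σ:ℝ) := by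
    rw [htdef, div_le_iff₀ hdR]; linarith
  -- cube ⊆ ball
  have hsub : (Set.univ.pi fun _ : Fin d => Set.Icc (-t) t) ⊆
      {x : Fin d → ℝ | Real.sqrt (∑ i, (x i) ^ 2) ≤ ε} := by
    intro x hx
    simp only [Set.mem_pi, Set.mem_univ, forall_true_left, Set.mem_Icc] at hx
    simp only [Set.mem_setOf_eq]
    have hsum : ∑ i, (x i) ^ 2 ≤ ε ^ 2 := by
      have hdt : (d : ℝ) * t ^ 2 = ε ^ 2 := by
        rw [htdef, div_pow, Real.sq_sqrt (Nat.cast_nonneg d)]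
        field_simp
      calc ∑ i, (x i) ^ 2 ≤ ∑ _i : Fin d, t ^ 2 := by
            apply Finset.sum_le_sum
            intro i _
            have : |x i| ≤ t := abs_le.mpr ⟨(hx i).1, (hx i).2⟩
            calc (x i)^2 = |x i|^2 := (sq_abs _).symm
              _ ≤ t^2 := by gcongr
        _ = (d : ℝ) * t ^ 2 := by simp [Finset.sum_const, mul_comm]
        _ = ε ^ 2 := hdt
    calc Real.sqrt (∑ i, (x i)^2) ≤ Real.sqrt (ε^2) := Real.sqrt_le_sqrt hsum
      _ = ε := Real.sqrt_sq hε.le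
  have h1 := gaussian_interval_lb σ hσ t ht htσ
  have heq : ε / (3 * (σ:ℝ) * Real.sqrt d) = t / (3 * (σ:ℝ)) := by
    rw [htdef, div_div, mul_comm (Real.sqrt (d:ℝ)) (3*(σ:ℝ))]
  calc ENNReal.ofReal ((ε / (3 * (σ : ℝ) * Real.sqrt d)) ^ d)
      = (ENNReal.ofReal (t / (3 * (σ:ℝ)))) ^ d := by
        rw [heq, ENNReal.ofReal_pow (by positivity)]
    _ ≤ (gaussianReal 0 (σ^2) (Set.Icc (-t) t)) ^ d := by gcongr
    _ = (Measure.pi fun _ : Fin d => gaussianReal 0 (σ ^ 2))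
          (Set.univ.pi fun _ : Fin d => Set.Icc (-t) t) := by
        rw [Measure.pi_pi]
        simp [Finset.prod_const]
    _ ≤ _ := measure_mono hsub
end

section
/- For all real a > 0, c > 0 and every integer K ≥ 1, ∫_{a}^{∞} x · exp(−c x^{2/K}) dx = (1/2) Σ_{i=1}^{K} (K(K−1)⋯(K−i+1)/c^{i}) · a^{2(K−i)/K} · exp(−c a^{2/K}). -/
open MeasureTheory Finset Filter Real

set_option linter.unusedVariables false

lemma aux_deriv (a c : ℝ) (hc : 0 < c) (K : ℕ) (hK : 1 ≤ K) (i : ℕ) (h1 : 1 ≤ i) (hiK : i ≤ K)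
    (x : ℝ) (hx : 0 < x) :
    HasDerivAt (fun y : ℝ => ((K.factorial : ℝ) / ((K - i).factorial : ℝ) / c ^ i) *
        (y ^ (2 * ((K : ℝ) - (i : ℝ)) / K) * Real.exp (-c * y ^ ((2 : ℝ) / K))))
      (((K.factorial : ℝ) / ((K - i).factorial : ℝ) / c ^ i) * (2 * ((K : ℝ) - (i : ℝ)) / K) *
          x ^ (2 * ((K : ℝ) - (i : ℝ)) / K - 1) * Real.exp (-c * x ^ ((2 : ℝ) / K))
        - ((K.factorial : ℝ) / ((K - (i-1)).factorial : ℝ) / c ^ (i-1)) *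
            (2 * ((K : ℝ) - ((i-1 : ℕ) : ℝ)) / K) *
            x ^ (2 * ((K : ℝ) - ((i-1 : ℕ) : ℝ)) / K - 1) * Real.exp (-c * x ^ ((2 : ℝ) / K))) x := by
  have hK0 : (K : ℝ) ≠ 0 := by positivity
  have hx' : x ≠ 0 := hx.ne'
  set p : ℝ := 2 * ((K : ℝ) - (i : ℝ)) / K with hp
  have hd1 : HasDerivAt (fun y : ℝ => y ^ p) (p * x ^ (p - 1)) x :=
    Real.hasDerivAt_rpow_const (Or.inl hx')
  have hd2 : HasDerivAt (fun y : ℝ => -c * y ^ ((2:ℝ)/K))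
      (-c * ((2:ℝ)/K * x ^ ((2:ℝ)/K - 1))) x :=
    (Real.hasDerivAt_rpow_const (Or.inl hx')).const_mul (-c)
  have hd3 := hd2.exp
  have hd4 := (hd1.mul hd3).const_mul ((K.factorial : ℝ) / ((K - i).factorial : ℝ) / c ^ i)
  refine hd4.congr_deriv ?_
  have hcast1 : ((i - 1 : ℕ) : ℝ) = (i : ℝ) - 1 := by
    have : ((i - 1 : ℕ) : ℝ) = ((i:ℕ) : ℝ) - ((1:ℕ):ℝ) := Nat.cast_sub h1
    simpa using this
  have hfac : (K - (i - 1)) = (K - i) + 1 := by omega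
  have hcpow : c ^ i = c ^ (i - 1) * c := by
    rw [← pow_succ]; congr 1; omega
  have hcKi : ((K - i : ℕ) : ℝ) = (K : ℝ) - i := Nat.cast_sub hiK
  have e1 : x ^ (2 * ((K : ℝ) - ((i:ℝ) - 1)) / K - 1) = x ^ p * x ^ ((2:ℝ)/K - 1) := by
    rw [← Real.rpow_add hx]; congr 1
    rw [hp, show 2 * ((K:ℝ) - ((i:ℝ) - 1)) = 2 * ((K:ℝ) - (i:ℝ)) + 2 from by ring, add_div]
    ring
  rw [hcast1, hfac, e1, Nat.factorial_succ]
  have hfacne : ((K - i).factorial : ℝ) ≠ 0 := Nat.cast_ne_zero.mpr (Nat.factorial_ne_zero _)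
  have hKi1 : ((K : ℝ) - i + 1) ≠ 0 := by
    have : (i:ℝ) ≤ K := by exact_mod_cast hiK
    nlinarith
  push_cast [hcKi]
  field_simp [hcpow]
  rw [hcpow]
  ring

lemma aux_tendsto (c : ℝ) (hc : 0 < c) (K : ℕ) (hK : 1 ≤ K) (p' : ℝ) :
    Tendsto (fun x : ℝ => x ^ p' * Real.exp (-c * x ^ ((2:ℝ)/K))) atTop (nhds 0) := by
  have hq : (0:ℝ) < 2 / K := by positivity
  have h1 := tendsto_rpow_mul_exp_neg_mul_atTop_nhds_zero (p' / ((2:ℝ)/K)) c hc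
  have h2 := tendsto_rpow_atTop hq
  refine (h1.comp h2).congr' ?_
  filter_upwards [eventually_gt_atTop (0:ℝ)] with x hx
  simp only [Function.comp]
  rw [← Real.rpow_mul hx.le]
  congr 2
  field_simp

/-- closed form for `∫_a^∞ x exp(-c x^{2/K}) dx`. -/
theorem integral_x_exp_neg_rpow (a c : ℝ) (ha : 0 < a) (hc : 0 < c) (K : ℕ) (hK : 1 ≤ K) :
    ∫ x in Set.Ioi a, x * Real.exp (-c * x ^ ((2 : ℝ) / K)) =
      (1 / 2) * ∑ i ∈ Finset.Icc 1 K,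
        ((K.factorial : ℝ) / ((K - i).factorial : ℝ) / c ^ i) *
          a ^ (2 * ((K : ℝ) - (i : ℝ)) / K) * Real.exp (-c * a ^ ((2 : ℝ) / K)) := by
  have hK0 : (K : ℝ) ≠ 0 := by positivity
  have hderiv : ∀ x ∈ Set.Ici a, HasDerivAt (fun x : ℝ => -(1/2) * ∑ j ∈ Finset.range K,
      ((K.factorial : ℝ) / ((K - (j+1)).factorial : ℝ) / c ^ (j+1)) *
        (x ^ (2 * ((K : ℝ) - ((j+1 : ℕ) : ℝ)) / K) * Real.exp (-c * x ^ ((2:ℝ)/K))))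
      (x * Real.exp (-c * x ^ ((2:ℝ)/K))) x := by
    intro x hx
    have hx0 : 0 < x := lt_of_lt_of_le ha hx
    set T : ℕ → ℝ := fun n => ((K.factorial : ℝ) / ((K - n).factorial : ℝ) / c ^ n) *
        (2 * ((K : ℝ) - (n : ℝ)) / K) * x ^ (2 * ((K : ℝ) - (n : ℝ)) / K - 1) *
        Real.exp (-c * x ^ ((2:ℝ)/K)) with hT
    have hsum : HasDerivAt (fun y : ℝ => ∑ j ∈ Finset.range K,
        ((K.factorial : ℝ) / ((K - (j+1)).factorial : ℝ) / c ^ (j+1)) *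
          (y ^ (2 * ((K : ℝ) - ((j+1 : ℕ) : ℝ)) / K) * Real.exp (-c * y ^ ((2:ℝ)/K))))
        (∑ j ∈ Finset.range K, (T (j+1) - T j)) x :=
      HasDerivAt.fun_sum (fun j hj =>
        aux_deriv a c hc K hK (j+1) (Nat.le_add_left 1 j) (Finset.mem_range.mp hj) x hx0)
    rw [Finset.sum_range_sub T K] at hsum
    have hTK : T K = 0 := by simp [hT]
    have hT0 : T 0 = 2 * x * Real.exp (-c * x ^ ((2:ℝ)/K)) := by
      have e2 : 2 * ((K:ℝ) - ((0:ℕ):ℝ)) / K = 2 := by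
        push_cast; rw [sub_zero, mul_div_assoc, div_self hK0, mul_one]
      simp only [hT, Nat.sub_zero, pow_zero, div_one, e2]
      rw [div_self (Nat.cast_ne_zero.mpr K.factorial_ne_zero),
        show (2:ℝ) - 1 = 1 by norm_num, Real.rpow_one]
      ring
    rw [hTK, hT0] at hsum
    have h2 := hsum.const_mul (-(1/2) : ℝ)
    refine h2.congr_deriv ?_
    ring
  have hpos : ∀ x ∈ Set.Ioi a, 0 ≤ x * Real.exp (-c * x ^ ((2:ℝ)/K)) :=
    fun x hx => mul_nonneg (le_of_lt (ha.trans hx)) (Real.exp_pos _).le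
  have htend : Filter.Tendsto (fun x : ℝ => -(1/2) * ∑ j ∈ Finset.range K,
      ((K.factorial : ℝ) / ((K - (j+1)).factorial : ℝ) / c ^ (j+1)) *
        (x ^ (2 * ((K : ℝ) - ((j+1 : ℕ) : ℝ)) / K) * Real.exp (-c * x ^ ((2:ℝ)/K))))
      atTop (nhds 0) := by
    have h0 := tendsto_finset_sum (Finset.range K)
      (fun j (_ : j ∈ Finset.range K) =>
        (aux_tendsto c hc K hK (2 * ((K : ℝ) - ((j+1 : ℕ) : ℝ)) / K)).const_mul
          ((K.factorial : ℝ) / ((K - (j+1)).factorial : ℝ) / c ^ (j+1)))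
    have h1 := h0.const_mul (-(1/2) : ℝ)
    simpa using h1
  have key := integral_Ioi_of_hasDerivAt_of_nonneg' hderiv hpos htend
  rw [key, ← Finset.Ico_add_one_right_eq_Icc, Finset.sum_Ico_eq_sum_range]
  simp only [Nat.add_sub_cancel]
  rw [zero_sub, neg_mul, neg_neg]
  congr 1
  refine Finset.sum_congr rfl fun j _ => ?_
  rw [Nat.add_comm 1 j]
  ring
end

section
/- Let χ_k be a chi-square random variable with k degrees of freedom, i.e. χ_k = Σ_{j=1}^{k} Z_j² where Z_1,…,Z_k are i.i.d. standard Gaussians. Then for every x > 0, P(χ_k ≥ k + 2√(xk) + 2x) ≤ exp(−x). -/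
open MeasureTheory ProbabilityTheory Finset
open scoped NNReal ENNReal Real

lemma cs_aux_one_add_le_exp {u : ℝ} (hu : 0 ≤ u) :
    1 + u ≤ Real.exp (u * (2 + u) / (2 * (1 + u))) := by
  set a := u * (2 + u) / (2 * (1 + u)) with ha
  have h1u : (0:ℝ) < 1 + u := by linarith
  have ha0 : 0 ≤ a := by positivity
  refine le_trans ?_ (Real.quadratic_le_exp_of_nonneg ha0)
  have hzero : a + a ^ 2 / 2 - u = u ^ 4 / (8 * (1 + u) ^ 2) := by
    rw [ha]; field_simp; ring
  have hpos : 0 ≤ u ^ 4 / (8 * (1 + u) ^ 2) := by positivity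
  linarith

lemma cs_gauss_sq_integrand_eq (l : ℝ) :
    (fun z : ℝ => gaussianPDFReal 0 1 z * Real.exp (l * z ^ 2)) =
      fun z : ℝ => (Real.sqrt (2 * Real.pi))⁻¹ * Real.exp (-(1/2 - l) * z ^ 2) := by
  funext z
  simp only [gaussianPDFReal, NNReal.coe_one, mul_one, sub_zero]
  rw [mul_assoc, ← Real.exp_add]
  congr 1
  ring

lemma cs_gauss_sq_integrable {l : ℝ} (hl : l < 1/2) :
    Integrable (fun z => Real.exp (l * z ^ 2)) (gaussianReal 0 1) := by
  have hb : (0:ℝ) < 1/2 - l := by linarith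
  rw [gaussianReal_of_var_ne_zero 0 one_ne_zero]
  have hmeas : Measurable fun z : ℝ => (gaussianPDFReal 0 1 z).toNNReal :=
    (measurable_gaussianPDFReal 0 1).real_toNNReal
  rw [show gaussianPDF 0 1 = fun z => ((gaussianPDFReal 0 1 z).toNNReal : ENNReal) from rfl,
    integrable_withDensity_iff_integrable_coe_smul hmeas]
  have : (fun z : ℝ => ((gaussianPDFReal 0 1 z).toNNReal : ℝ) • Real.exp (l * z ^ 2)) =
      fun z : ℝ => (Real.sqrt (2 * Real.pi))⁻¹ * Real.exp (-(1/2 - l) * z ^ 2) := by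
    funext z
    rw [smul_eq_mul, Real.coe_toNNReal _ (gaussianPDFReal_nonneg 0 1 z)]
    exact congrFun (cs_gauss_sq_integrand_eq l) z
  rw [this]
  exact (integrable_exp_neg_mul_sq hb).const_mul _

lemma cs_gauss_sq_mgf {l : ℝ} (hl : l < 1/2) :
    ∫ z, Real.exp (l * z ^ 2) ∂(gaussianReal 0 1) = (Real.sqrt (1 - 2 * l))⁻¹ := by
  have hb : (0:ℝ) < 1/2 - l := by linarith
  rw [gaussianReal_of_var_ne_zero 0 one_ne_zero]
  have hmeas : Measurable fun z : ℝ => (gaussianPDFReal 0 1 z).toNNReal :=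
    (measurable_gaussianPDFReal 0 1).real_toNNReal
  rw [show gaussianPDF 0 1 = fun z => ((gaussianPDFReal 0 1 z).toNNReal : ENNReal) from rfl,
    integral_withDensity_eq_integral_smul hmeas]
  have h1 : (fun z : ℝ => ((gaussianPDFReal 0 1 z).toNNReal : ℝ≥0) • Real.exp (l * z ^ 2)) =
      fun z : ℝ => (Real.sqrt (2 * Real.pi))⁻¹ * Real.exp (-(1/2 - l) * z ^ 2) := by
    funext z
    rw [NNReal.smul_def, smul_eq_mul, Real.coe_toNNReal _ (gaussianPDFReal_nonneg 0 1 z)]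
    exact congrFun (cs_gauss_sq_integrand_eq l) z
  rw [h1, integral_const_mul, integral_gaussian]
  rw [← Real.sqrt_inv, ← Real.sqrt_inv, ← Real.sqrt_mul (by positivity)]
  congr 1
  have h2 : (1:ℝ) - 2 * l ≠ 0 := by linarith
  have h3 : Real.pi * 2 - Real.pi * l * 4 ≠ 0 := by
    have := Real.pi_pos; nlinarith
  field_simp

lemma cs_pi_integral_pow (μ : Measure ℝ) [SigmaFinite μ] (f : ℝ → ℝ) (k : ℕ) :
    ∫ z : Fin k → ℝ, ∏ i, f (z i) ∂(Measure.pi fun _ => μ) = (∫ v, f v ∂μ) ^ k := by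
  letI : MeasureSpace ℝ := ⟨μ⟩
  haveI : SigmaFinite (volume : Measure ℝ) := ‹SigmaFinite μ›
  have := MeasureTheory.integral_fintype_prod_eq_pow (ι := Fin k) f (μ := μ)
  rw [Fintype.card_fin] at this
  exact this

lemma cs_pi_integrable_prod (μ : Measure ℝ) [SigmaFinite μ] {f : ℝ → ℝ}
    (hf : Integrable f μ) (k : ℕ) :
    Integrable (fun z : Fin k → ℝ => ∏ i, f (z i)) (Measure.pi fun _ => μ) := by
  letI : MeasureSpace ℝ := ⟨μ⟩
  haveI : SigmaFinite (volume : Measure ℝ) := ‹SigmaFinite μ›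
  exact MeasureTheory.Integrable.fintype_prod (fun _ => hf)

/-- Laurent–Massart type tail bound for the chi-square distribution with `k`
degrees of freedom, realized as the law of `Σ_j Z_j²` for i.i.d. standard Gaussians. -/
theorem chi_square_tail_laurent_massart (k : ℕ) (x : ℝ) (hx : 0 < x) :
    (Measure.pi fun _ : Fin k => gaussianReal 0 1)
        {z | (k : ℝ) + 2 * Real.sqrt (x * k) + 2 * x ≤ ∑ j, (z j) ^ 2} ≤
      ENNReal.ofReal (Real.exp (-x)) := by
  rcases Nat.eq_zero_or_pos k with hk | hk
  · subst hk
    have hset : {z : Fin 0 → ℝ | ((0:ℕ) : ℝ) + 2 * Real.sqrt (x * (0:ℕ)) + 2 * x ≤ ∑ j, (z j) ^ 2}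
        = ∅ := by
      ext z
      simp only [Set.mem_setOf_eq, Set.mem_empty_iff_false, iff_false, not_le, Nat.cast_zero,
        mul_zero, Real.sqrt_zero, Finset.univ_eq_empty, Finset.sum_empty]
      linarith
    rw [hset]
    simp
  · have hk0 : (0:ℝ) < k := by exact_mod_cast hk
    set s : ℝ := Real.sqrt (x / k) with hs_def
    have hs : 0 < s := Real.sqrt_pos.mpr (by positivity)
    have hs2 : s ^ 2 = x / k := Real.sq_sqrt (by positivity)
    have hxk : x = k * s ^ 2 := by rw [hs2]; field_simp
    have hsq : Real.sqrt (x * k) = k * s := by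
      rw [show x * k = ((k : ℝ) * s) ^ 2 by rw [hxk]; ring]
      exact Real.sqrt_sq (by positivity)
    set lam : ℝ := s / (1 + 2 * s) with hlam_def
    have h12s : (0:ℝ) < 1 + 2 * s := by linarith
    have hlam0 : 0 < lam := by positivity
    have hlam : lam < 1 / 2 := by
      rw [hlam_def, div_lt_div_iff₀ h12s (by norm_num)]
      linarith
    have hA : 1 - 2 * lam = (1 + 2 * s)⁻¹ := by
      rw [hlam_def]; field_simp; ring
    set t : ℝ := (k : ℝ) + 2 * Real.sqrt (x * k) + 2 * x with ht_def
    set μ : Measure (Fin k → ℝ) := Measure.pi fun _ => gaussianReal 0 1 with hμ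
    have hint1 : Integrable (fun z => Real.exp (lam * z ^ 2)) (gaussianReal 0 1) :=
      cs_gauss_sq_integrable hlam
    have hexp_eq : (fun z : Fin k → ℝ => Real.exp (lam * ∑ j, (z j) ^ 2)) =
        fun z : Fin k → ℝ => ∏ j, Real.exp (lam * (z j) ^ 2) := by
      funext z
      rw [Finset.mul_sum, Real.exp_sum]
    have hint : Integrable (fun z : Fin k → ℝ => Real.exp (lam * ∑ j, (z j) ^ 2)) μ := by
      rw [hexp_eq]
      exact cs_pi_integrable_prod _ hint1 k
    have hch := measure_ge_le_exp_mul_mgf (X := fun z : Fin k → ℝ => ∑ j, (z j) ^ 2)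
      (μ := μ) t hlam0.le hint
    have hmgf : mgf (fun z : Fin k → ℝ => ∑ j, (z j) ^ 2) μ lam
        = ((Real.sqrt (1 - 2 * lam))⁻¹) ^ k := by
      calc mgf (fun z : Fin k → ℝ => ∑ j, (z j) ^ 2) μ lam
          = ∫ z, Real.exp (lam * ∑ j, (z j) ^ 2) ∂μ := rfl
        _ = ∫ z, ∏ j, Real.exp (lam * (z j) ^ 2) ∂μ := by rw [hexp_eq]
        _ = (∫ v, Real.exp (lam * v ^ 2) ∂(gaussianReal 0 1)) ^ k := by
            rw [hμ]; exact cs_pi_integral_pow (gaussianReal 0 1) (fun v => Real.exp (lam * v ^ 2)) k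
        _ = ((Real.sqrt (1 - 2 * lam))⁻¹) ^ k := by rw [cs_gauss_sq_mgf hlam]
    -- the key analytic bound
    set a : ℝ := 2 * s * (1 + s) / (1 + 2 * s) with ha_def
    have hsqrtA : (Real.sqrt (1 - 2 * lam))⁻¹ = Real.sqrt (1 + 2 * s) := by
      rw [hA, Real.sqrt_inv, inv_inv]
    have hbase : Real.sqrt (1 + 2 * s) ≤ Real.exp (a / 2) := by
      have h := cs_aux_one_add_le_exp (u := 2 * s) (by linarith)
      have heq : (2 * s) * (2 + 2 * s) / (2 * (1 + 2 * s)) = a := by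
        rw [ha_def]; field_simp
      rw [heq] at h
      calc Real.sqrt (1 + 2 * s) ≤ Real.sqrt (Real.exp a) := Real.sqrt_le_sqrt h
        _ = Real.exp (a / 2) := (Real.exp_half a).symm
    have hpow : (Real.sqrt (1 + 2 * s)) ^ k ≤ Real.exp ((k : ℝ) * (a / 2)) := by
      calc (Real.sqrt (1 + 2 * s)) ^ k ≤ (Real.exp (a / 2)) ^ k :=
            pow_le_pow_left₀ (Real.sqrt_nonneg _) hbase k
        _ = Real.exp ((k : ℝ) * (a / 2)) := by rw [← Real.exp_nat_mul]
    have hid : (k : ℝ) * (a / 2) = lam * t - x := by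
      have htt : t = (k : ℝ) + 2 * ((k : ℝ) * s) + 2 * ((k : ℝ) * s ^ 2) := by
        rw [ht_def, hsq, ← hxk]
      rw [htt, hlam_def, ha_def, hxk]
      field_simp
      ring
    have hfinal : Real.exp (-lam * t) * ((Real.sqrt (1 - 2 * lam))⁻¹) ^ k ≤ Real.exp (-x) := by
      rw [hsqrtA]
      calc Real.exp (-lam * t) * (Real.sqrt (1 + 2 * s)) ^ k
          ≤ Real.exp (-lam * t) * Real.exp (lam * t - x) := by
            rw [← hid]
            exact mul_le_mul_of_nonneg_left hpow (Real.exp_nonneg _)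
        _ = Real.exp (-x) := by rw [← Real.exp_add]; ring_nf
    rw [ENNReal.le_ofReal_iff_toReal_le (measure_ne_top μ _) (Real.exp_nonneg _)]
    calc (μ {z | t ≤ ∑ j, (z j) ^ 2}).toReal
        ≤ Real.exp (-lam * t) * mgf (fun z : Fin k → ℝ => ∑ j, (z j) ^ 2) μ lam := hch
      _ ≤ Real.exp (-x) := by rw [hmgf]; exact hfinal
end
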